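/- Let a < b, let β be continuously differentiable on [a,b] with β(x) ≥ β_0 > 0 for all x, let q and f be continuous on [a,b], and let u be twice continuously differentiable on [a,b] satisfying β(x)·u''(x) + β'(x)·u'(x) − q(x)·u(x) + f(x) = 0 for all x in [a,b]. Then for every x in [a,b], |u''(x) + (β'(x)/β(x))·(u(b)−u(a))/(b−a) − (q(x)/β(x))·u_I(x) + f(x)/β(x)| ≤ (sup_{[a,b]}|β'| / β_0)·(b−a)·sup_{[a,b]}|u''| + (sup_{[a,b]}|q| / β_0)·((b−a)^2/8)·sup_{[a,b]}|u''|, where u_I is the linear interpolant of u on [a,b]. -/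

import Mathlib

/-- Bound on the difference between `u'` and the slope of the chord. -/
lemma slope_replacement_bound (a b : ℝ) (hab : a < b) (u u' u'' : ℝ → ℝ)
    (hu' : ∀ x ∈ Set.Icc a b, HasDerivWithinAt u (u' x) (Set.Icc a b) x)
    (hu'' : ∀ x ∈ Set.Icc a b, HasDerivWithinAt u' (u'' x) (Set.Icc a b) x)
    (M : ℝ) (hM : ∀ t ∈ Set.Icc a b, |u'' t| ≤ M)
    (x : ℝ) (hx : x ∈ Set.Icc a b) :
    |u' x - (u b - u a) / (b - a)| ≤ M * (b - a) := by
  have hucont : ContinuousOn u (Set.Icc a b) := fun t ht =>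
    (hu' t ht).continuousWithinAt
  obtain ⟨ξ, hξ, hslope⟩ := exists_hasDerivAt_eq_slope u u' hab hucont
    (fun t ht => (hu' t (Set.Ioo_subset_Icc_self ht)).hasDerivAt
      (Icc_mem_nhds ht.1 ht.2))
  have hξI : ξ ∈ Set.Icc a b := Set.Ioo_subset_Icc_self hξ
  have h1 : ‖u' x - u' ξ‖ ≤ M * ‖x - ξ‖ :=
    Convex.norm_image_sub_le_of_norm_hasDerivWithin_le hu''
      (fun t ht => hM t ht) (convex_Icc a b) hξI hx
  have h2 : |x - ξ| ≤ b - a := by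
    rw [abs_le]; constructor <;> [linarith [hx.1, hξI.2]; linarith [hx.2, hξI.1]]
  have hM0 : 0 ≤ M := (abs_nonneg _).trans (hM x hx)
  calc |u' x - (u b - u a) / (b - a)| = ‖u' x - u' ξ‖ := by rw [hslope]; rfl
    _ ≤ M * ‖x - ξ‖ := h1
    _ ≤ M * (b - a) := by exact mul_le_mul_of_nonneg_left h2 hM0

/-- Standard linear interpolation error bound. -/
lemma interp_error_bound (a b : ℝ) (hab : a < b) (u u' u'' : ℝ → ℝ)
    (hu' : ∀ x ∈ Set.Icc a b, HasDerivWithinAt u (u' x) (Set.Icc a b) x)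
    (hu'' : ∀ x ∈ Set.Icc a b, HasDerivWithinAt u' (u'' x) (Set.Icc a b) x)
    (M : ℝ) (hM : ∀ t ∈ Set.Icc a b, |u'' t| ≤ M)
    (x : ℝ) (hx : x ∈ Set.Icc a b) :
    |u x - (u a * (b - x) / (b - a) + u b * (x - a) / (b - a))|
      ≤ M * ((b - a) ^ 2 / 8) := by
  have hba : (0:ℝ) < b - a := by linarith
  have hba' : b - a ≠ 0 := ne_of_gt hba
  have hM0 : 0 ≤ M := (abs_nonneg _).trans (hM x hx)
  set e : ℝ → ℝ := fun t => u t - (u a * (b - t) / (b - a) + u b * (t - a) / (b - a))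
    with he
  set e' : ℝ → ℝ := fun t => u' t - (u b - u a) / (b - a) with he'
  have hlin : ∀ t : ℝ, HasDerivAt
      (fun s => u a * (b - s) / (b - a) + u b * (s - a) / (b - a))
      ((u b - u a) / (b - a)) t := by
    intro t
    have h1 := (((hasDerivAt_const t b).sub (hasDerivAt_id t)).const_mul (u a)).div_const (b - a)
    have h2 := (((hasDerivAt_id t).sub (hasDerivAt_const t a)).const_mul (u b)).div_const (b - a)
    have h3 := h1.add h2
    refine h3.congr_deriv ?_
    ring
  have hed : ∀ t ∈ Set.Ioo a b, HasDerivAt e (e' t) t := fun t ht =>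
    ((hu' t (Set.Ioo_subset_Icc_self ht)).hasDerivAt
      (Icc_mem_nhds ht.1 ht.2)).sub (hlin t)
  have hecont : ContinuousOn e (Set.Icc a b) := by
    apply ContinuousOn.sub (fun t ht => (hu' t ht).continuousWithinAt)
    fun_prop
  have hea : e a = 0 := by
    show u a - (u a * (b - a) / (b - a) + u b * (a - a) / (b - a)) = 0
    field_simp
    ring
  have heb : e b = 0 := by
    show u b - (u a * (b - b) / (b - a) + u b * (b - a) / (b - a)) = 0
    field_simp
    ring
  -- reduce to interior points
  show |e x| ≤ M * ((b - a) ^ 2 / 8)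
  rcases eq_or_lt_of_le hx.1 with h | hax
  · rw [← h, hea, abs_zero]; positivity
  rcases eq_or_lt_of_le hx.2 with h | hxb
  · rw [h, heb, abs_zero]; positivity
  -- x interior
  have hxa : (0:ℝ) < x - a := by linarith
  have hbx : (0:ℝ) < b - x := by linarith
  set K : ℝ := 2 * e x / ((x - a) * (b - x)) with hK
  set g : ℝ → ℝ := fun t => e t - K * ((t - a) * (b - t)) / 2 with hg
  set g' : ℝ → ℝ := fun t => e' t - K * (b + a - 2 * t) / 2 with hg'
  have hquad : ∀ t : ℝ, HasDerivAt (fun s => K * ((s - a) * (b - s)) / 2)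
      (K * (b + a - 2 * t) / 2) t := by
    intro t
    have h1 := (((hasDerivAt_id t).sub (hasDerivAt_const t a))).mul
        ((hasDerivAt_const t b).sub (hasDerivAt_id t))
    have h2 := (h1.const_mul K).div_const 2
    refine h2.congr_deriv ?_
    simp only [Pi.sub_apply, id_eq]
    ring
  have hgd : ∀ t ∈ Set.Ioo a b, HasDerivAt g (g' t) t := fun t ht =>
    (hed t ht).sub (hquad t)
  have hg'd : ∀ t ∈ Set.Ioo a b, HasDerivAt g' (u'' t + K) t := by
    intro t ht
    have h1 : HasDerivAt e' (u'' t) t :=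
      ((hu'' t (Set.Ioo_subset_Icc_self ht)).hasDerivAt
        (Icc_mem_nhds ht.1 ht.2)).sub_const _
    have h2 : HasDerivAt (fun s => K * (b + a - 2 * s) / 2) (-K) t := by
      have : HasDerivAt (fun s : ℝ => b + a - 2 * s) (-2) t := by
        have := ((hasDerivAt_id t).const_mul (2:ℝ)).const_sub (b + a)
        refine this.congr_deriv ?_; ring
      have := (this.const_mul K).div_const 2
      refine this.congr_deriv ?_; ring
    have := h1.sub h2
    refine this.congr_deriv ?_; ring
  have hxane : x - a ≠ 0 := ne_of_gt hxa
  have hbxne : b - x ≠ 0 := ne_of_gt hbx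
  have hgx : g x = 0 := by
    show e x - 2 * e x / ((x - a) * (b - x)) * ((x - a) * (b - x)) / 2 = 0
    field_simp
    ring
  have hga : g a = 0 := by simp [hg, hea]
  have hgb : g b = 0 := by simp [hg, heb]
  have hgcont : ContinuousOn g (Set.Icc a b) := by
    apply hecont.sub; fun_prop
  obtain ⟨c₁, hc₁, hgc₁⟩ := exists_hasDerivAt_eq_zero hax
    (hgcont.mono (Set.Icc_subset_Icc le_rfl hx.2)) (hga.trans hgx.symm)
    (fun t ht => hgd t ⟨ht.1, lt_trans ht.2 hxb⟩)
  obtain ⟨c₂, hc₂, hgc₂⟩ := exists_hasDerivAt_eq_zero hxb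
    (hgcont.mono (Set.Icc_subset_Icc hx.1 le_rfl)) (hgx.trans hgb.symm)
    (fun t ht => hgd t ⟨lt_trans hax ht.1, ht.2⟩)
  have hc12 : c₁ < c₂ := lt_trans hc₁.2 hc₂.1
  have hsub : Set.Icc c₁ c₂ ⊆ Set.Ioo a b := fun t ht =>
    ⟨lt_of_lt_of_le hc₁.1 ht.1, lt_of_le_of_lt ht.2 hc₂.2⟩
  obtain ⟨ξ, hξ, hξ0⟩ := exists_hasDerivAt_eq_zero hc12
    (fun t ht => ((hg'd t (hsub ht)).continuousAt).continuousWithinAt)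
    (hgc₁.trans hgc₂.symm)
    (fun t ht => hg'd t (hsub (Set.Ioo_subset_Icc_self ht)))
  have hξI : ξ ∈ Set.Icc a b := Set.Ioo_subset_Icc_self (hsub (Set.Ioo_subset_Icc_self hξ))
  have hKval : K = -u'' ξ := by linarith [hξ0]
  have hKbd : |K| ≤ M := by rw [hKval, abs_neg]; exact hM ξ hξI
  have hex : e x = K * ((x - a) * (b - x)) / 2 := by
    rw [hK]; field_simp
  have hprod : (x - a) * (b - x) ≤ (b - a) ^ 2 / 4 := by
    nlinarith [sq_nonneg ((b - x) - (x - a))]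
  calc |e x| = |K| * ((x - a) * (b - x)) / 2 := by
        rw [hex, abs_div, abs_mul, abs_of_pos (by positivity : (0:ℝ) < (x - a) * (b - x)),
          abs_two]
    _ ≤ M * ((b - a) ^ 2 / 4) / 2 := by
        apply div_le_div_of_nonneg_right ?_ (by norm_num)
        · exact mul_le_mul hKbd hprod (by positivity) hM0
    _ = M * ((b - a) ^ 2 / 8) := by ring

/-- For the Sturm–Liouville equation `β u'' + β' u' − q u + f = 0` on `[a,b]`
with `β ≥ β₀ > 0`, replacing `u'` by the constant derivative `(u b − u a)/(b−a)` of the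
linear interpolant and `u` by the linear interpolant `u_I` in
`u'' = −(β'/β) u' + (q/β) u − f/β` incurs an error bounded by
`(sup|β'|/β₀)(b−a) sup|u''| + (sup|q|/β₀)((b−a)²/8) sup|u''|`. -/
theorem second_derivative_replacement_first_order
    (a b β₀ : ℝ) (hab : a < b) (hβ₀ : 0 < β₀)
    (β β' q f u u' u'' : ℝ → ℝ)
    (hβd : ∀ x ∈ Set.Icc a b, HasDerivWithinAt β (β' x) (Set.Icc a b) x)
    (hβ'c : ContinuousOn β' (Set.Icc a b))
    (hβlb : ∀ x ∈ Set.Icc a b, β₀ ≤ β x)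
    (hq : ContinuousOn q (Set.Icc a b))
    (hf : ContinuousOn f (Set.Icc a b))
    (hu' : ∀ x ∈ Set.Icc a b, HasDerivWithinAt u (u' x) (Set.Icc a b) x)
    (hu'' : ∀ x ∈ Set.Icc a b, HasDerivWithinAt u' (u'' x) (Set.Icc a b) x)
    (hu''c : ContinuousOn u'' (Set.Icc a b))
    (hode : ∀ x ∈ Set.Icc a b, β x * u'' x + β' x * u' x - q x * u x + f x = 0) :
    ∀ x ∈ Set.Icc a b,
      |u'' x + β' x / β x * ((u b - u a) / (b - a))
          - q x / β x * (u a * (b - x) / (b - a) + u b * (x - a) / (b - a))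
          + f x / β x|
        ≤ (⨆ t : Set.Icc a b, |β' t|) / β₀ * (b - a) * (⨆ t : Set.Icc a b, |u'' t|)
          + (⨆ t : Set.Icc a b, |q t|) / β₀ * ((b - a) ^ 2 / 8)
            * (⨆ t : Set.Icc a b, |u'' t|) := by
  intro x hx
  have hne : (Set.Icc a b).Nonempty := Set.nonempty_Icc.2 hab.le
  haveI : Nonempty (Set.Icc a b) := hne.to_subtype
  set M := ⨆ t : Set.Icc a b, |u'' t| with hMdef
  set Bβ := ⨆ t : Set.Icc a b, |β' t| with hBβdef
  set Bq := ⨆ t : Set.Icc a b, |q t| with hBqdef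
  have bddM : BddAbove (Set.range fun t : Set.Icc a b => |u'' t|) :=
    (isCompact_range (continuous_abs.comp hu''c.restrict)).bddAbove
  have bddβ : BddAbove (Set.range fun t : Set.Icc a b => |β' t|) :=
    (isCompact_range (continuous_abs.comp hβ'c.restrict)).bddAbove
  have bddq : BddAbove (Set.range fun t : Set.Icc a b => |q t|) :=
    (isCompact_range (continuous_abs.comp hq.restrict)).bddAbove
  have hM : ∀ t ∈ Set.Icc a b, |u'' t| ≤ M := fun t ht =>
    le_ciSup bddM (⟨t, ht⟩ : Set.Icc a b)
  have hBβ : ∀ t ∈ Set.Icc a b, |β' t| ≤ Bβ := fun t ht =>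
    le_ciSup bddβ (⟨t, ht⟩ : Set.Icc a b)
  have hBq : ∀ t ∈ Set.Icc a b, |q t| ≤ Bq := fun t ht =>
    le_ciSup bddq (⟨t, ht⟩ : Set.Icc a b)
  have hM0 : 0 ≤ M := (abs_nonneg _).trans (hM x hx)
  have hBβ0 : 0 ≤ Bβ := (abs_nonneg _).trans (hBβ x hx)
  have hBq0 : 0 ≤ Bq := (abs_nonneg _).trans (hBq x hx)
  have hβx : 0 < β x := lt_of_lt_of_le hβ₀ (hβlb x hx)
  have hβxne : β x ≠ 0 := ne_of_gt hβx
  have hba : (0:ℝ) < b - a := by linarith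
  set S := (u b - u a) / (b - a) with hS
  set uI := u a * (b - x) / (b - a) + u b * (x - a) / (b - a) with huI
  have key : u'' x + β' x / β x * S - q x / β x * uI + f x / β x
      = β' x / β x * (S - u' x) + q x / β x * (u x - uI) := by
    have h := hode x hx
    field_simp
    linarith [h]
  have h1 : |u' x - S| ≤ M * (b - a) :=
    slope_replacement_bound a b hab u u' u'' hu' hu'' M hM x hx
  have h2 : |u x - uI| ≤ M * ((b - a) ^ 2 / 8) :=
    interp_error_bound a b hab u u' u'' hu' hu'' M hM x hx
  have h1' : |S - u' x| ≤ M * (b - a) := by rw [abs_sub_comm]; exact h1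
  rw [key]
  calc |β' x / β x * (S - u' x) + q x / β x * (u x - uI)|
      ≤ |β' x / β x * (S - u' x)| + |q x / β x * (u x - uI)| := abs_add_le _ _
    _ = |β' x| / β x * |S - u' x| + |q x| / β x * |u x - uI| := by
        rw [abs_mul, abs_mul, abs_div, abs_div, abs_of_pos hβx]
    _ ≤ Bβ / β₀ * (M * (b - a)) + Bq / β₀ * (M * ((b - a) ^ 2 / 8)) := by
        apply add_le_add
        · exact mul_le_mul (div_le_div₀ hBβ0 (hBβ x hx) hβ₀ (hβlb x hx)) h1'
            (abs_nonneg _) (by positivity)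
        · exact mul_le_mul (div_le_div₀ hBq0 (hBq x hx) hβ₀ (hβlb x hx)) h2
            (abs_nonneg _) (by positivity)
    _ = Bβ / β₀ * (b - a) * M + Bq / β₀ * ((b - a) ^ 2 / 8) * M := by ring
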